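/- Let a₁,…,aₙ be complex numbers all of absolute value r. Then the tropical sum a₁⊞⋯⊞aₙ contains 0 if and only if 0 lies in the convex hull of {a₁,…,aₙ}; moreover if 0 is in the convex hull then the tropical sum is the whole closed disk of radius r centered at 0, and otherwise the tropical sum is contained in a closed half-circle of the circle of radius r and equals the tropical sum of at most two of the summands. -/

import Mathlib

open Classical in
/-- The shortest arc connecting `a` and `b` on the circle `{z : |z| = |a|}`
(for `|a| = |b|`, `a + b ≠ 0`): the points of the circle lying on the cone
of nonnegative combinations of `a` and `b`. -/
noncomputable def arc (a b : ℂ) : Set ℂ :=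
  {c | ‖c‖ = ‖a‖ ∧
    ∃ l m : ℝ, 0 ≤ l ∧ 0 ≤ m ∧ c = (l : ℂ) * a + (m : ℂ) * b}

open Classical in
/-- The tropical sum of two complex numbers. -/
noncomputable def tropAdd (a b : ℂ) : Set ℂ :=
  if ‖b‖ < ‖a‖ then {a}
  else if ‖a‖ < ‖b‖ then {b}
  else if a + b = 0 then {c | ‖c‖ ≤ ‖a‖}
  else arc a b

/-- Elementwise extension of the tropical addition to subsets. -/
def setTrop (A B : Set ℂ) : Set ℂ :=
  ⋃ a ∈ A, ⋃ b ∈ B, tropAdd a b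

/-- The tropical sum of a list of complex numbers (the empty sum is `{0}`). -/
noncomputable def tropSumList (l : List ℂ) : Set ℂ :=
  l.foldr (fun a S => setTrop {a} S) {0}

/-- cross product -/
def cross (a b : ℂ) : ℝ := a.re * b.im - a.im * b.re

lemma cramer (p q z : ℂ) :
    (cross z q : ℂ) * p + (cross p z : ℂ) * q = (cross p q : ℂ) * z := by
  apply Complex.ext <;> simp [cross] <;> ring

lemma cross_swap (a b : ℂ) : cross a b = - cross b a := by simp [cross]; ring

lemma cross_eq_zero {a b : ℂ} (h : ‖a‖ = ‖b‖) (ha : a ≠ 0)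
    (h0 : cross a b = 0) : b = a ∨ b = -a := by
  have hw : (starRingEnd ℂ) a * b = (((starRingEnd ℂ) a * b).re : ℂ) := by
    apply Complex.ext
    · simp
    · simp only [Complex.mul_im, Complex.ofReal_im]
      simp [Complex.conj_re, Complex.conj_im]
      have := h0
      simp [cross] at this
      linarith
  set t : ℝ := ((starRingEnd ℂ) a * b).re with ht
  have hns : (Complex.normSq a : ℂ) * b = a * (t : ℂ) := by
    calc (Complex.normSq a : ℂ) * b = (a * (starRingEnd ℂ) a) * b := by
          rw [Complex.mul_conj]
      _ = a * ((starRingEnd ℂ) a * b) := by ring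
      _ = a * (t:ℂ) := by rw [← hw]
  have hb : b = (t / Complex.normSq a : ℝ) * a := by
    have hna : (Complex.normSq a : ℂ) ≠ 0 := by
      simpa [Complex.normSq_eq_zero] using ha
    field_simp
    rw [mul_comm] at hns
    rw [Complex.ofReal_div, div_mul_eq_mul_div, eq_div_iff hna, hns]; ring
  have habs : |t / Complex.normSq a| = 1 := by
    have : ‖b‖ = |t / Complex.normSq a| * ‖a‖ := by
      rw [hb]; simp [abs_mul, abs_div]
    rw [← h] at this
    have h0' : ‖a‖ ≠ 0 := by simpa using ha
    have h0'' : ‖a‖ > 0 := lt_of_le_of_ne (norm_nonneg a) (Ne.symm h0')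
    nlinarith [this]
  rcases abs_eq (by norm_num : (0:ℝ) ≤ 1) |>.mp habs with h1 | h1
  · left; rw [hb, h1]; simp
  · right; rw [hb, h1]; simp

lemma cross_comb (l m : ℝ) (p q w : ℂ) :
    cross ((l:ℂ)*p+(m:ℂ)*q) w = l * cross p w + m * cross q w := by
  simp [cross]; ring

lemma cross_self' (a : ℂ) : cross a a = 0 := by simp [cross]; ring

lemma mem_arc_left {a b : ℂ} : a ∈ arc a b := by
  refine ⟨rfl, 1, 0, zero_le_one, le_refl 0, by simp⟩

lemma mem_arc_right {a b : ℂ} (h : ‖b‖ = ‖a‖) : b ∈ arc a b := by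
  refine ⟨h, 0, 1, le_refl 0, zero_le_one, by simp⟩

lemma abs_of_mem_arc {a b c : ℂ} (h : c ∈ arc a b) : ‖c‖ = ‖a‖ := h.1

/-- geodesic convexity of arcs -/
lemma arc_subset_arc {x y p q : ℂ} (hx : x ∈ arc p q) (hy : y ∈ arc p q) :
    arc x y ⊆ arc p q := by
  rintro c ⟨hc, l, m, hl, hm, rfl⟩
  obtain ⟨hxa, l1, m1, hl1, hm1, rfl⟩ := hx
  obtain ⟨hya, l2, m2, hl2, hm2, rfl⟩ := hy
  refine ⟨by rw [hc, hxa], l*l1 + m*l2, l*m1 + m*m2, by positivity, by positivity, ?_⟩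
  push_cast
  ring

lemma cone_iff {p q : ℂ} (hpq : cross p q ≠ 0) (z : ℂ) :
    (∃ l m : ℝ, 0 ≤ l ∧ 0 ≤ m ∧ z = (l:ℂ) * p + (m:ℂ) * q) ↔
    0 ≤ cross z q * cross p q ∧ 0 ≤ cross p z * cross p q := by
  constructor
  · rintro ⟨l, m, hl, hm, rfl⟩
    constructor
    · rw [cross_comb, cross_self']
      nlinarith [sq_nonneg (cross p q)]
    · rw [show cross p ((l:ℂ)*p+(m:ℂ)*q) = - cross ((l:ℂ)*p+(m:ℂ)*q) p by rw [cross_swap],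
        cross_comb, cross_self', cross_swap q p]
      nlinarith [sq_nonneg (cross p q)]
  · rintro ⟨h1, h2⟩
    refine ⟨cross z q / cross p q, cross p z / cross p q, ?_, ?_, ?_⟩
    · apply div_nonneg_iff.mpr
      rcases lt_trichotomy (cross p q) 0 with h | h | h
      · right; constructor
        · nlinarith
        · linarith
      · exact absurd h hpq
      · left; constructor
        · nlinarith
        · linarith
    · apply div_nonneg_iff.mpr
      rcases lt_trichotomy (cross p q) 0 with h | h | h
      · right; constructor
        · nlinarith
        · linarith
      · exact absurd h hpq
      · left; constructor
        · nlinarith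
        · linarith
    · have := cramer p q z
      have hc : (cross p q : ℂ) ≠ 0 := by exact_mod_cast hpq
      field_simp
      rw [Complex.ofReal_div, Complex.ofReal_div, div_mul_eq_mul_div, div_mul_eq_mul_div, ← add_div, this, mul_div_cancel_left₀ _ hc]

lemma cross_neg_left (a b : ℂ) : cross (-a) b = - cross a b := by simp [cross]; ring

lemma mem_arc_iff_cone {p q : ℂ} (hpq : cross p q ≠ 0) {z : ℂ}
    (hz : ‖z‖ = ‖p‖) :
    z ∈ arc p q ↔ (0 ≤ cross z q * cross p q ∧ 0 ≤ cross p z * cross p q) := by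
  constructor
  · rintro ⟨_, h⟩; exact (cone_iff hpq z).mp h
  · intro h; exact ⟨hz, (cone_iff hpq z).mpr h⟩

lemma signs {S A1 A2 : ℝ} (hS : S ≠ 0) (h1 : A1 ≠ 0) (h2 : A2 ≠ 0)
    (hna : ¬(0 ≤ -A1*S ∧ 0 ≤ -A2*S)) :
    (0 ≤ A1*S ∧ 0 ≤ A2*S) ∨ (0 ≤ S*A1 ∧ 0 ≤ -A2*A1) ∨ (0 ≤ S*A2 ∧ 0 ≤ -A1*A2) := by
  rcases hS.lt_or_gt with h | h <;> rcases h1.lt_or_gt with g1 | g1 <;>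
    rcases h2.lt_or_gt with g2 | g2 <;>
    first
      | (left; constructor <;> nlinarith)
      | (right; left; constructor <;> nlinarith)
      | (right; right; constructor <;> nlinarith)
      | (exact absurd ⟨by nlinarith, by nlinarith⟩ hna)

lemma trich {a p q : ℂ} {r : ℝ} (hr : 0 < r) (ha : ‖a‖ = r)
    (hp : ‖p‖ = r) (hq : ‖q‖ = r) (hpq0 : p + q ≠ 0)
    (hna : -a ∉ arc p q) :
    a ∈ arc p q ∨ p ∈ arc a q ∨ q ∈ arc a p := by
  have ha0 : a ≠ 0 := fun h => by simp [h] at ha; exact absurd ha.symm (ne_of_gt hr)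
  have hp0 : p ≠ 0 := fun h => by simp [h] at hp; exact absurd hp.symm (ne_of_gt hr)
  have hq0 : q ≠ 0 := fun h => by simp [h] at hq; exact absurd hq.symm (ne_of_gt hr)
  have hqp : ‖q‖ = ‖p‖ := by rw [hp, hq]
  have hap : ‖a‖ = ‖p‖ := by rw [ha, hp]
  have haq : ‖a‖ = ‖q‖ := by rw [ha, hq]
  by_cases hap' : a = p
  · exact Or.inl (by rw [hap']; exact mem_arc_left)
  by_cases haq' : a = q
  · exact Or.inl (by rw [haq']; exact mem_arc_right hqp)
  by_cases hanp : a = -p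
  · exact absurd (by rw [hanp, neg_neg]; exact mem_arc_left) hna
  by_cases hanq : a = -q
  · exact absurd (by rw [hanq, neg_neg]; exact mem_arc_right hqp) hna
  by_cases hpq' : p = q
  · exact Or.inr (Or.inl (by rw [hpq']; exact mem_arc_right (hqp.trans hap.symm)))
  have hS : cross p q ≠ 0 := by
    intro h
    rcases cross_eq_zero hqp.symm hp0 h with h' | h'
    · exact hpq' h'.symm
    · exact hpq0 (by rw [h']; ring)
  have hA1 : cross a q ≠ 0 := by
    intro h
    rcases cross_eq_zero haq ha0 h with h' | h'
    · exact haq' h'.symm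
    · exact hanq (by rw [h', neg_neg])
  have hA2 : cross p a ≠ 0 := by
    intro h
    rcases cross_eq_zero hap.symm hp0 h with h' | h'
    · exact hap' h'
    · exact hanp h'
  have hna' : ¬(0 ≤ -(cross a q) * cross p q ∧ 0 ≤ -(cross p a) * cross p q) := by
    intro ⟨u, v⟩
    apply hna
    rw [mem_arc_iff_cone hS (by simpa using hap)]
    rw [cross_neg_left]
    rw [show cross p (-a) = - cross p a by rw [cross_swap, cross_neg_left, cross_swap p a]]
    exact ⟨u, v⟩
  rcases signs hS hA1 hA2 hna' with ⟨u, v⟩ | ⟨u, v⟩ | ⟨u, v⟩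
  · exact Or.inl ((mem_arc_iff_cone hS hap).mpr ⟨u, v⟩)
  · refine Or.inr (Or.inl ((mem_arc_iff_cone (p := a) (q := q) ?_ hap.symm).mpr ⟨?_, ?_⟩))
    · exact hA1
    · exact u
    · rw [show cross a p = - cross p a by rw [cross_swap]]
      exact v
  · refine Or.inr (Or.inr ((mem_arc_iff_cone (p := a) (q := p) ?_ (hqp.trans hap.symm)).mpr ⟨?_, ?_⟩))
    · rw [show cross a p = -cross p a by rw [cross_swap]]
      simpa using hA2
    · rw [show cross a p = -cross p a by rw [cross_swap], cross_swap q p]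
      nlinarith
    · rw [show cross a p = -cross p a by rw [cross_swap]]
      nlinarith

lemma tropAdd_eq_arc {a b : ℂ} (h : ‖a‖ = ‖b‖) (h0 : a + b ≠ 0) :
    tropAdd a b = arc a b := by
  simp [tropAdd, h, h0]

lemma tropAdd_neg (a : ℂ) : tropAdd a (-a) = {c | ‖c‖ ≤ ‖a‖} := by
  simp [tropAdd]

lemma arc_self {a : ℂ} (ha : a ≠ 0) : arc a a = {a} := by
  ext c
  constructor
  · rintro ⟨hc, l, m, hl, hm, rfl⟩
    have : ((l + m : ℝ) : ℂ) * a = (l:ℂ)*a + (m:ℂ)*a := by push_cast; ring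
    rw [← this] at hc ⊢
    rw [norm_mul, Complex.norm_real, Real.norm_eq_abs] at hc
    have ha' : ‖a‖ ≠ 0 := by simpa using ha
    have : |l + m| = 1 := by
      field_simp at hc
      tauto
    rw [abs_of_nonneg (by linarith)] at this
    simp [this]
  · rintro rfl
    exact mem_arc_left

lemma setTrop_singleton (a : ℂ) (B : Set ℂ) :
    setTrop {a} B = ⋃ b ∈ B, tropAdd a b := by
  simp [setTrop]

lemma tropAdd_subset_disk {a b : ℂ} {r : ℝ} (ha : ‖a‖ ≤ r)
    (hb : ‖b‖ ≤ r) : tropAdd a b ⊆ {c | ‖c‖ ≤ r} := by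
  intro c hc
  unfold tropAdd at hc
  split_ifs at hc with h1 h2 h3
  · simp only [Set.mem_singleton_iff] at hc; simp [hc, ha]
  · simp only [Set.mem_singleton_iff] at hc; simp [hc, hb]
  · exact le_trans hc ha
  · exact le_trans (le_of_eq hc.1) ha

lemma arc_halfplane {p q : ℂ} {r : ℝ} (hr : 0 < r) (hp : ‖p‖ = r)
    (hq : ‖q‖ = r) (hpq : p + q ≠ 0) :
    ∀ z ∈ arc p q, 0 < (z * (starRingEnd ℂ) (p + q)).re := by
  rintro z ⟨hz, l, m, hl, hm, rfl⟩
  have hnp : p.re^2 + p.im^2 = r^2 := by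
    have := Complex.sq_norm p
    rw [hp] at this
    simpa [Complex.normSq_apply, sq] using this.symm
  have hnq : q.re^2 + q.im^2 = r^2 := by
    have := Complex.sq_norm q
    rw [hq] at this
    simpa [Complex.normSq_apply, sq] using this.symm
  have hpos : 0 < (p.re + q.re)^2 + (p.im + q.im)^2 := by
    have := Complex.normSq_pos.mpr hpq
    simpa [Complex.normSq_apply, sq] using this
  have hlm : 0 < l + m := by
    rcases lt_or_eq_of_le (by positivity : (0:ℝ) ≤ l + m) with h | h
    · exact h
    · exfalso
      have hl0 : l = 0 := by linarith
      have hm0 : m = 0 := by linarith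
      rw [hl0, hm0] at hz
      simp at hz
      rw [hp] at hz
      linarith
  simp only [Complex.mul_re, Complex.add_re, Complex.add_im, Complex.mul_im,
    Complex.ofReal_re, Complex.ofReal_im, map_add, Complex.conj_re, Complex.conj_im]
  nlinarith [mul_pos hlm hpos, mul_pos hlm hr]

lemma hull_in_halfplane {s : Set ℂ} {w : ℂ} (h : ∀ z ∈ s, 0 < (z * (starRingEnd ℂ) w).re) :
    ∀ z ∈ convexHull ℝ s, 0 < (z * (starRingEnd ℂ) w).re := by
  have hlin : IsLinearMap ℝ (fun z : ℂ => (z * (starRingEnd ℂ) w).re) := by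
    constructor
    · intro x y; simp [add_mul]
    · intro c x; simp [smul_mul_assoc, Complex.smul_re]; ring
  have hconv : Convex ℝ {z : ℂ | 0 < (z * (starRingEnd ℂ) w).re} :=
    convex_halfSpace_gt hlin 0
  exact fun z hz => convexHull_min h hconv hz

lemma zero_mem_hull {s : Set ℂ} {a p q : ℂ} (has : a ∈ s) (hps : p ∈ s) (hqs : q ∈ s)
    (ha0 : a ≠ 0) {l m : ℝ} (hl : 0 ≤ l) (hm : 0 ≤ m)
    (h : -a = (l:ℂ)*p + (m:ℂ)*q) : (0:ℂ) ∈ convexHull ℝ s := by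
  set T := l + m with hT
  have hT0 : 0 < T := by
    rcases lt_or_eq_of_le (by positivity : (0:ℝ) ≤ T) with h' | h'
    · exact h'
    · exfalso
      have hl0 : l = 0 := by rw [hT] at h'; linarith
      have hm0 : m = 0 := by rw [hT] at h'; linarith
      rw [hl0, hm0] at h
      simp at h
      exact ha0 h
  have hC := convex_convexHull ℝ s
  have hx : (l/T:ℝ) • p + (m/T:ℝ) • q ∈ convexHull ℝ s :=
    hC (subset_convexHull ℝ s hps) (subset_convexHull ℝ s hqs)
      (div_nonneg hl hT0.le) (div_nonneg hm hT0.le)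
      (by field_simp; exact hT.symm)
  have hz : (1/(1+T):ℝ) • a + (T/(1+T):ℝ) • ((l/T:ℝ) • p + (m/T:ℝ) • q) ∈ convexHull ℝ s :=
    hC (subset_convexHull ℝ s has) hx
      (by positivity) (by positivity)
      (by field_simp)
  have heq : (1/(1+T):ℝ) • a + (T/(1+T):ℝ) • ((l/T:ℝ) • p + (m/T:ℝ) • q) = (0:ℂ) := by
    simp only [Complex.real_smul]
    have hTc : ((T:ℝ):ℂ) ≠ 0 := Complex.ofReal_ne_zero.mpr (ne_of_gt hT0)
    have h1Tc : ((1+T:ℝ):ℂ) ≠ 0 := Complex.ofReal_ne_zero.mpr (by linarith)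
    push_cast at hTc h1Tc ⊢
    rw [hT] at hTc h1Tc ⊢
    push_cast at hTc h1Tc ⊢
    field_simp
    linear_combination (-1:ℂ) * h
  rw [heq] at hz
  exact hz

lemma mem_setTrop {a c : ℂ} {B : Set ℂ} :
    c ∈ setTrop {a} B ↔ ∃ b ∈ B, c ∈ tropAdd a b := by simp [setTrop]

lemma tropSumList_cons (a : ℂ) (l : List ℂ) :
    tropSumList (a::l) = setTrop {a} (tropSumList l) := rfl

lemma key {r : ℝ} (hr : 0 < r) : ∀ l : List ℂ, l ≠ [] → (∀ a ∈ l, ‖a‖ = r) →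
    (tropSumList l = {c | ‖c‖ ≤ r} ∧ (0:ℂ) ∈ convexHull ℝ {a | a ∈ l}) ∨
    (∃ p ∈ l, ∃ q ∈ l, p + q ≠ 0 ∧ tropSumList l = arc p q ∧ ∀ x ∈ l, x ∈ arc p q) := by
  intro l
  induction l with
  | nil => intro h; exact absurd rfl h
  | cons a l ih =>
    intro _ habs
    have ha : ‖a‖ = r := habs a (List.mem_cons_self)
    have ha0 : a ≠ 0 := by
      intro h; rw [h] at ha; simp at ha; exact absurd ha.symm (ne_of_gt hr)
    rcases eq_or_ne l [] with rfl | hl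
    · right
      refine ⟨a, List.mem_cons_self, a, List.mem_cons_self, ?_, ?_, ?_⟩
      · intro h
        apply ha0
        have : (2:ℂ) * a = 0 := by rw [← h]; ring
        simpa using this
      · rw [tropSumList_cons]
        have h0 : tropSumList ([] : List ℂ) = {0} := rfl
        rw [h0]
        have : setTrop {a} {0} = tropAdd a 0 := by
          ext c; simp [setTrop]
        rw [this]
        have : tropAdd a 0 = {a} := by
          have h' : ‖(0:ℂ)‖ < ‖a‖ := by simp [ha, hr]
          unfold tropAdd
          rw [if_pos h']
        rw [this, arc_self ha0]
      · intro x hx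
        rcases List.mem_cons.mp hx with rfl | hx'
        · exact mem_arc_left
        · simp at hx'
    · have hl' : ∀ x ∈ l, ‖x‖ = r := fun x hx => habs x (List.mem_cons_of_mem a hx)
      rcases ih hl hl' with ⟨hdisk, hhull⟩ | ⟨p, hp, q, hq, hpq0, heq, hmem⟩
      · -- disk case: stays a disk
        left
        constructor
        · rw [tropSumList_cons, hdisk]
          ext c
          rw [mem_setTrop]
          constructor
          · rintro ⟨b, hb, hcb⟩
            exact tropAdd_subset_disk (le_of_eq ha) hb hcb
          · intro hc
            refine ⟨-a, ?_, ?_⟩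
            · simp [ha]
            · rw [tropAdd_neg]
              simpa [ha] using hc
        · apply convexHull_mono (s := {x | x ∈ l})
          · intro x hx; exact List.mem_cons_of_mem a hx
          · exact hhull
      · have habsp : ‖p‖ = r := hl' p hp
        have habsq : ‖q‖ = r := hl' q hq
        have harc_abs : ∀ x ∈ arc p q, ‖x‖ = r := fun x hx => hx.1.trans habsp
        have hqparc : q ∈ arc p q := mem_arc_right (habsq.trans habsp.symm)
        have hparc : p ∈ arc p q := mem_arc_left
        by_cases hna : -a ∈ arc p q
        · -- becomes a disk
          left
          constructor
          · rw [tropSumList_cons, heq]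
            ext c
            rw [mem_setTrop]
            constructor
            · rintro ⟨b, hb, hcb⟩
              exact tropAdd_subset_disk (le_of_eq ha) (le_of_eq (harc_abs b hb)) hcb
            · intro hc
              refine ⟨-a, hna, ?_⟩
              rw [tropAdd_neg]
              simpa [ha] using hc
          · obtain ⟨_, lc, mc, hlc, hmc, hceq⟩ := hna
            exact zero_mem_hull (List.mem_cons_self)
              (List.mem_cons_of_mem a hp) (List.mem_cons_of_mem a hq) ha0 hlc hmc hceq
        · -- stays an arc
          right
          have hax : ∀ x ∈ arc p q, a + x ≠ 0 := by
            intro x hx h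
            apply hna
            have : -a = x := by linear_combination -h
            rw [this]; exact hx
          have htrop : ∀ x ∈ arc p q, tropAdd a x = arc a x := by
            intro x hx
            exact tropAdd_eq_arc (ha.trans (harc_abs x hx).symm) (hax x hx)
          rcases trich hr ha habsp habsq hpq0 hna with hcase | hcase | hcase
          · -- a inside the arc
            refine ⟨p, List.mem_cons_of_mem a hp, q, List.mem_cons_of_mem a hq, hpq0, ?_, ?_⟩
            · rw [tropSumList_cons, heq]
              ext c
              rw [mem_setTrop]
              constructor
              · rintro ⟨b, hb, hcb⟩
                rw [htrop b hb] at hcb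
                exact arc_subset_arc hcase hb hcb
              · intro hc
                exact ⟨c, hc, by rw [htrop c hc]; exact mem_arc_right ((harc_abs c hc).trans ha.symm)⟩
            · intro x hx
              rcases List.mem_cons.mp hx with rfl | hx'
              · exact hcase
              · exact hmem x hx'
          · -- p between a and q : result arc a q
            have hqaq : q ∈ arc a q := mem_arc_right (habsq.trans ha.symm)
            have hsub : arc p q ⊆ arc a q := arc_subset_arc hcase hqaq
            refine ⟨a, List.mem_cons_self, q, List.mem_cons_of_mem a hq, hax q hqparc, ?_, ?_⟩
            · rw [tropSumList_cons, heq]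
              ext c
              rw [mem_setTrop]
              constructor
              · rintro ⟨b, hb, hcb⟩
                rw [htrop b hb] at hcb
                exact arc_subset_arc mem_arc_left (hsub hb) hcb
              · intro hc
                exact ⟨q, hqparc, by rw [htrop q hqparc]; exact hc⟩
            · intro x hx
              rcases List.mem_cons.mp hx with rfl | hx'
              · exact mem_arc_left
              · exact hsub (hmem x hx')
          · -- q between a and p : result arc a p
            have hpap : p ∈ arc a p := mem_arc_right (habsp.trans ha.symm)
            have hsub : arc p q ⊆ arc a p := arc_subset_arc hpap hcase
            refine ⟨a, List.mem_cons_self, p, List.mem_cons_of_mem a hp, hax p hparc, ?_, ?_⟩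
            · rw [tropSumList_cons, heq]
              ext c
              rw [mem_setTrop]
              constructor
              · rintro ⟨b, hb, hcb⟩
                rw [htrop b hb] at hcb
                exact arc_subset_arc mem_arc_left (hsub hb) hcb
              · intro hc
                exact ⟨p, hparc, by rw [htrop p hparc]; exact hc⟩
            · intro x hx
              rcases List.mem_cons.mp hx with rfl | hx'
              · exact mem_arc_left
              · exact hsub (hmem x hx')

lemma tropSum_zeros : ∀ l : List ℂ, (∀ a ∈ l, a = 0) → tropSumList l = {0} := by
  intro l
  induction l with
  | nil => intro _; rfl
  | cons a l ih =>
    intro h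
    have ha : a = 0 := h a (List.mem_cons_self)
    rw [tropSumList_cons, ih (fun x hx => h x (List.mem_cons_of_mem a hx)), ha]
    have : setTrop {(0:ℂ)} {0} = tropAdd 0 0 := by ext c; simp [setTrop]
    rw [this]
    have h1 : ¬ ‖(0:ℂ)‖ < ‖(0:ℂ)‖ := lt_irrefl _
    unfold tropAdd
    rw [if_neg h1, if_neg h1, if_pos (by ring)]
    ext c
    simp only [Set.mem_setOf_eq, Set.mem_singleton_iff]
    constructor
    · intro h'; exact norm_eq_zero.mp (le_antisymm (by simpa using h') (norm_nonneg c))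
    · rintro rfl; simp


/-- for complex numbers `a₁,…,aₙ` all of absolute value `r`,
the tropical sum contains `0` iff `0` lies in the convex hull of the
summands; if so, the tropical sum is the whole closed disk of radius `r`;
otherwise it is contained in a closed half-circle of the circle of radius
`r` and equals the tropical sum of at most two of the summands. -/
theorem tropSum_of_equal_abs (l : List ℂ) (r : ℝ) (hl : l ≠ [])
    (habs : ∀ a ∈ l, ‖a‖ = r) :
    (0 ∈ tropSumList l ↔ (0 : ℂ) ∈ convexHull ℝ {a | a ∈ l}) ∧
    ((0 : ℂ) ∈ convexHull ℝ {a | a ∈ l} →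
      tropSumList l = {c | ‖c‖ ≤ r}) ∧
    ((0 : ℂ) ∉ convexHull ℝ {a | a ∈ l} →
      (∃ u : ℂ, ‖u‖ = 1 ∧
        tropSumList l ⊆ {c | ‖c‖ = r ∧ 0 ≤ (c * (starRingEnd ℂ) u).re}) ∧
      ∃ a ∈ l, ∃ b ∈ l, tropSumList l = tropAdd a b) := by
  obtain ⟨a₀, ha₀⟩ := List.exists_mem_of_ne_nil l hl
  have hr0 : 0 ≤ r := by rw [← habs a₀ ha₀]; exact norm_nonneg a₀
  rcases eq_or_lt_of_le hr0 with hrz | hr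
  · -- r = 0
    have hall : ∀ a ∈ l, a = 0 := by
      intro a ha
      have := habs a ha
      rw [← hrz] at this
      exact norm_eq_zero.mp this
    have hsum := tropSum_zeros l hall
    have hhull : (0:ℂ) ∈ convexHull ℝ {a | a ∈ l} := by
      have : a₀ = 0 := hall a₀ ha₀
      exact subset_convexHull ℝ {a | a ∈ l} (by rw [← this]; exact ha₀)
    refine ⟨⟨fun _ => hhull, fun _ => by rw [hsum]; rfl⟩, fun _ => ?_, fun h => absurd hhull h⟩
    rw [hsum]
    ext c
    simp only [Set.mem_singleton_iff, Set.mem_setOf_eq, ← hrz]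
    constructor
    · rintro rfl; simp
    · intro h; exact norm_eq_zero.mp (le_antisymm h (norm_nonneg c))
  · rcases key hr l hl habs with ⟨hdisk, hhull⟩ | ⟨p, hp, q, hq, hpq0, heq, hmem⟩
    · refine ⟨⟨fun _ => hhull, fun _ => ?_⟩, fun _ => hdisk, fun h => absurd hhull h⟩
      rw [hdisk]
      show ‖0‖ ≤ r
      simp [hr.le]
    · have habsp : ‖p‖ = r := habs p hp
      have habsq : ‖q‖ = r := habs q hq
      have hhalf := arc_halfplane hr habsp habsq hpq0
      have hnot : (0:ℂ) ∉ convexHull ℝ {a | a ∈ l} := by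
        intro h0
        have := hull_in_halfplane (s := {a | a ∈ l}) (w := p + q)
          (fun z hz => hhalf z (hmem z hz)) 0 h0
        simp at this
      have hzero : (0:ℂ) ∉ tropSumList l := by
        rw [heq]
        rintro ⟨habs0, -⟩
        rw [habsp] at habs0
        simp at habs0
        exact absurd habs0.symm (ne_of_gt hr)
      refine ⟨⟨fun h => absurd h hzero, fun h => absurd h hnot⟩, fun h => absurd h hnot,
        fun _ => ⟨?_, p, hp, q, hq, heq.trans (tropAdd_eq_arc (habsp.trans habsq.symm) hpq0).symm⟩⟩
      set t : ℝ := ‖(p + q)‖ with htdef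
      have ht : 0 < t := by
        rw [htdef]
        exact norm_pos_iff.mpr hpq0
      refine ⟨(p + q) / (t : ℂ), ?_, ?_⟩
      · rw [norm_div]
        simp [htdef]
        exact hpq0
      · intro c hc
        rw [heq] at hc
        refine ⟨hc.1.trans habsp, ?_⟩
        have h1 : (starRingEnd ℂ) ((p + q) / (t:ℂ)) = (starRingEnd ℂ) (p + q) / (t:ℂ) := by
          rw [map_div₀]
          simp
        rw [h1, ← mul_div_assoc, Complex.div_ofReal_re]
        exact le_of_lt (div_pos (hhalf c hc) ht)
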